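/- arXiv:2601.23249 — 4 statements merged into one kernel-verified Lean document; each statement's English description precedes it below -/
import Mathlib

section
/- Let B ⊆ [0,1]^d be nonempty compact convex, w ∈ ℝ^d, β = max{⟨w,x⟩ : x ∈ B ∩ {0,1}^d}, and suppose max{⟨w,x⟩ : x ∈ B} > β and for every coordinate i there exist u, v ∈ B ∩ {0,1}^d with ⟨w,u⟩ = ⟨w,v⟩ = β and u_i ≠ v_i. Then for every m ≥ 1, any branch-and-bound tree solving max{Σ_{t=1}^m ⟨w,x_t⟩ : x ∈ B^m ∩ {0,1}^{dm}} using only variable disjunctions x_{t,i} ≤ 0 or x_{t,i} ≥ 1 has at least 2^{m+1} − 1 nodes. -/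
/-- The set of 0/1 vectors in `Fin d → ℝ`. -/
def Binary (d : ℕ) : Set (Fin d → ℝ) := {x | ∀ i, x i = 0 ∨ x i = 1}

/-- A branch-and-bound tree using only variable disjunctions: each internal node
branches on a single coordinate `x t i` into the cases `x t i = 0` and `x t i = 1`. -/
inductive BBTree (m d : ℕ) : Type where
  | leaf : BBTree m d
  | branch : Fin m → Fin d → BBTree m d → BBTree m d → BBTree m d

/-- Total number of nodes of a branch-and-bound tree. -/
def BBTree.nodes {m d : ℕ} : BBTree m d → ℕ
  | .leaf => 1
  | .branch _ _ l r => 1 + l.nodes + r.nodes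

/-- `Solves obj bound T R` holds when the branch-and-bound tree `T`, applied to the
LP relaxation region `R`, fathoms every leaf: a leaf region is either infeasible or
has LP relaxation value at most `bound` (the optimal integer value / incumbent).
Branching on `x t i` intersects the region with `x t i = 0`, resp. `x t i = 1`
(equivalent to the disjunction `x t i ≤ 0` or `x t i ≥ 1` within the box `[0,1]`). -/
def Solves {m d : ℕ} (obj : (Fin m → Fin d → ℝ) → ℝ) (bound : ℝ) :
    BBTree m d → Set (Fin m → Fin d → ℝ) → Prop
  | .leaf, R => R = ∅ ∨ ∀ x ∈ R, obj x ≤ bound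
  | .branch t i l r, R =>
      Solves obj bound l (R ∩ {x | x t i = 0}) ∧
      Solves obj bound r (R ∩ {x | x t i = 1})

lemma BBTree.one_le_nodes {m d : ℕ} (T : BBTree m d) : 1 ≤ T.nodes := by
  cases T <;> simp [BBTree.nodes] <;> omega

lemma key_lemma {m d : ℕ} (B : Set (Fin d → ℝ)) (w : Fin d → ℝ) (β : ℝ)
    (xstar : Fin d → ℝ) (hxB : xstar ∈ B) (hxval : β < ∑ i, w i * xstar i)
    (hpair' : ∀ i : Fin d, ∀ b : ℝ, (b = 0 ∨ b = 1) →
      ∃ u, u ∈ B ∧ u ∈ Binary d ∧ (∑ j, w j * u j) = β ∧ u i = b) :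
    ∀ (T : BBTree m d) (S : Finset (Fin m)) (p : Fin m → Fin d → ℝ)
      (R : Set (Fin m → Fin d → ℝ)),
      (∀ t ∉ S, p t ∈ Binary d ∧ (∑ j, w j * p t j) = β) →
      (∀ x : Fin m → Fin d → ℝ, (∀ t ∉ S, x t = p t) → (∀ t ∈ S, x t ∈ B) → x ∈ R) →
      Solves (fun x => ∑ t, ∑ i, w i * x t i) ((m : ℝ) * β) T R →
      2 ^ (S.card + 1) - 1 ≤ T.nodes := by
  intro T
  induction T with
  | leaf =>
    intro S p R hp hcyl hs
    rcases S.eq_empty_or_nonempty with rfl | hSne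
    · simp [BBTree.nodes]
    · exfalso
      set γ : ℝ := ∑ i, w i * xstar i with hγ
      set x : Fin m → Fin d → ℝ := fun t => if t ∈ S then xstar else p t with hx
      have hxR : x ∈ R := by
        apply hcyl
        · intro t ht; simp [hx, ht]
        · intro t ht; simp [hx, ht, hxB]
      have hinner : ∀ t : Fin m, (∑ i, w i * x t i) = if t ∈ S then γ else β := by
        intro t
        by_cases ht : t ∈ S
        · simp [hx, ht, hγ]
        · simp [hx, ht, (hp t ht).2]
      have hcard : S.card ≤ m := by
        simpa using Finset.card_le_card (Finset.subset_univ S)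
      have hobj : (m : ℝ) * β < ∑ t, ∑ i, w i * x t i := by
        have hsum : (∑ t, ∑ i, w i * x t i)
            = (S.card : ℝ) * γ + ((m : ℝ) - S.card) * β := by
          rw [Finset.sum_congr rfl (fun t _ => hinner t), Finset.sum_ite,
            Finset.sum_const, Finset.sum_const]
          have h1 : Finset.univ.filter (· ∈ S) = S := by
            ext t; simp
          have h2 : (Finset.univ.filter (fun t => ¬ t ∈ S)).card = m - S.card := by
            rw [Finset.filter_not, h1]
            simp [Finset.card_sdiff_of_subset (Finset.subset_univ S)]
          rw [h1, h2]
          rw [nsmul_eq_mul, nsmul_eq_mul, Nat.cast_sub hcard]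
        rw [hsum]
        have h1 : (1 : ℝ) ≤ S.card := by
          have := Finset.card_pos.mpr hSne
          exact_mod_cast this
        nlinarith
      simp only [Solves] at hs
      rcases hs with h | h
      · rw [h] at hxR; exact hxR
      · exact absurd (h x hxR) (not_le.mpr hobj)
  | branch t i l r ihl ihr =>
    intro S p R hp hcyl hs
    simp only [Solves] at hs
    obtain ⟨hsl, hsr⟩ := hs
    simp only [BBTree.nodes]
    by_cases ht : t ∈ S
    · -- branch on a free block: both children get hardness S.erase t
      set S' := S.erase t with hS'
      have hsub : ∀ (b : ℝ), (b = 0 ∨ b = 1) →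
          ∀ (T' : BBTree m d), Solves (fun x => ∑ t, ∑ i, w i * x t i) ((m : ℝ) * β) T'
            (R ∩ {x | x t i = b}) →
          (∀ (S'' : Finset (Fin m)) (p'' : Fin m → Fin d → ℝ)
              (R'' : Set (Fin m → Fin d → ℝ)),
            (∀ t' ∉ S'', p'' t' ∈ Binary d ∧ (∑ j, w j * p'' t' j) = β) →
            (∀ x : Fin m → Fin d → ℝ, (∀ t' ∉ S'', x t' = p'' t') →
              (∀ t' ∈ S'', x t' ∈ B) → x ∈ R'') →
            Solves (fun x => ∑ t, ∑ i, w i * x t i) ((m : ℝ) * β) T' R'' →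
            2 ^ (S''.card + 1) - 1 ≤ T'.nodes) →
          2 ^ (S'.card + 1) - 1 ≤ T'.nodes := by
        intro b hb T' hsolve ih
        obtain ⟨u, huB, hubin, huval, hui⟩ := hpair' i b hb
        apply ih S' (Function.update p t u) (R ∩ {x | x t i = b})
        · intro t' ht'
          by_cases h : t' = t
          · subst h; simpa using ⟨hubin, huval⟩
          · rw [Function.update_of_ne h]
            apply hp
            intro hmem
            exact ht' (Finset.mem_erase.mpr ⟨h, hmem⟩)
        · intro x h1 h2
          have hxt : x t = u := by
            have := h1 t (by simp [hS'])
            simpa using this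
          constructor
          · apply hcyl
            · intro t' ht'
              have hne : t' ≠ t := fun h => ht' (h ▸ ht)
              have := h1 t' (fun hmem => ht' (Finset.mem_of_mem_erase hmem))
              rwa [Function.update_of_ne hne] at this
            · intro t' ht'
              by_cases h : t' = t
              · subst h; rw [hxt]; exact huB
              · exact h2 t' (Finset.mem_erase.mpr ⟨h, ht'⟩)
          · show x t i = b
            rw [hxt]; exact hui
        · exact hsolve
      have h0 : 2 ^ (S'.card + 1) - 1 ≤ l.nodes := hsub 0 (Or.inl rfl) l hsl ihl
      have h1 : 2 ^ (S'.card + 1) - 1 ≤ r.nodes := hsub 1 (Or.inr rfl) r hsr ihr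
      have hcard : S.card = S'.card + 1 := (Finset.card_erase_add_one ht).symm
      rw [hcard, pow_succ]
      have hpos : 1 ≤ 2 ^ (S'.card + 1) := Nat.one_le_two_pow
      omega
    · -- branch on a fixed block: the consistent child keeps hardness S
      have hbin := (hp t ht).1 i
      have main : ∀ (b : ℝ) (T' : BBTree m d), p t i = b →
          Solves (fun x => ∑ t, ∑ i, w i * x t i) ((m : ℝ) * β) T'
            (R ∩ {x | x t i = b}) →
          (∀ (S'' : Finset (Fin m)) (p'' : Fin m → Fin d → ℝ)
              (R'' : Set (Fin m → Fin d → ℝ)),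
            (∀ t' ∉ S'', p'' t' ∈ Binary d ∧ (∑ j, w j * p'' t' j) = β) →
            (∀ x : Fin m → Fin d → ℝ, (∀ t' ∉ S'', x t' = p'' t') →
              (∀ t' ∈ S'', x t' ∈ B) → x ∈ R'') →
            Solves (fun x => ∑ t, ∑ i, w i * x t i) ((m : ℝ) * β) T' R'' →
            2 ^ (S''.card + 1) - 1 ≤ T'.nodes) →
          2 ^ (S.card + 1) - 1 ≤ T'.nodes := by
        intro b T' hbval hsolve ih
        apply ih S p (R ∩ {x | x t i = b})
        · exact hp
        · intro x h1 h2
          refine ⟨hcyl x h1 h2, ?_⟩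
          show x t i = b
          rw [h1 t ht]; exact hbval
        · exact hsolve
      rcases hbin with hb | hb
      · have h0 : 2 ^ (S.card + 1) - 1 ≤ l.nodes := main 0 l hb hsl ihl
        have h1 : 1 ≤ r.nodes := r.one_le_nodes
        omega
      · have h1 : 2 ^ (S.card + 1) - 1 ≤ r.nodes := main 1 r hb hsr ihr
        have h0 : 1 ≤ l.nodes := l.one_le_nodes
        omega

theorem stmt_10 (d : ℕ) (B : Set (Fin d → ℝ)) (w : Fin d → ℝ)
    (hB : B ⊆ {x | ∀ i, x i ∈ Set.Icc (0:ℝ) 1})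
    (hne : B.Nonempty) (hcomp : IsCompact B) (hconv : Convex ℝ B)
    (β : ℝ)
    (hβ : IsGreatest ((fun x => ∑ i, w i * x i) '' (B ∩ Binary d)) β)
    (hgap : ∃ x ∈ B, β < ∑ i, w i * x i)
    (hpair : ∀ i : Fin d, ∃ u ∈ B ∩ Binary d, ∃ v ∈ B ∩ Binary d,
      (∑ j, w j * u j) = β ∧ (∑ j, w j * v j) = β ∧ u i ≠ v i)
    (m : ℕ) (hm : 1 ≤ m)
    (T : BBTree m d)
    (hT : Solves (fun x => ∑ t, ∑ i, w i * x t i) ((m : ℝ) * β) T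
      {x | ∀ t, x t ∈ B}) :
    2 ^ (m + 1) - 1 ≤ T.nodes := by
  obtain ⟨x0, hx0B, hx0gap⟩ := hgap
  have hpair' : ∀ i : Fin d, ∀ b : ℝ, (b = 0 ∨ b = 1) →
      ∃ u, u ∈ B ∧ u ∈ Binary d ∧ (∑ j, w j * u j) = β ∧ u i = b := by
    intro i b hb
    obtain ⟨u, hu, v, hv, huval, hvval, hnei⟩ := hpair i
    rcases hu.2 i with hui | hui <;> rcases hv.2 i with hvi | hvi
    · exact absurd (hui.trans hvi.symm) hnei
    · rcases hb with rfl | rfl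
      · exact ⟨u, hu.1, hu.2, huval, hui⟩
      · exact ⟨v, hv.1, hv.2, hvval, hvi⟩
    · rcases hb with rfl | rfl
      · exact ⟨v, hv.1, hv.2, hvval, hvi⟩
      · exact ⟨u, hu.1, hu.2, huval, hui⟩
    · exact absurd (hui.trans hvi.symm) hnei
  have := key_lemma B w β x0 hx0B hx0gap hpair' T Finset.univ (fun _ _ => 0)
    {x | ∀ t, x t ∈ B}
    (fun t ht => absurd (Finset.mem_univ t) ht)
    (fun x _ h2 t => h2 t (Finset.mem_univ t))
    hT
  simpa using this
end

section
/- Consider a single block with variables (b, p, y₁, y₂, y₃) ∈ [0,1]⁵, objective 24b + Mp + 4y₁ + 8y₂ + 8y₃ with M ≥ 15, and constraints 2b + p ≤ 2, b + y₁ + y₂ ≤ 2, b + y₁ + y₃ ≤ 2, b + y₂ + y₃ ≤ 2. The LP maximum equals M + 27, attained uniquely at b = 1/2, p = 1, y₁ = y₂ = y₃ = 3/4. -/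
/-- Feasibility of a single block (b, p, y₁, y₂, y₃) ∈ [0,1]⁵. -/
def BlockFeas (b p y1 y2 y3 : ℝ) : Prop :=
  b ∈ Set.Icc (0:ℝ) 1 ∧ p ∈ Set.Icc (0:ℝ) 1 ∧ y1 ∈ Set.Icc (0:ℝ) 1 ∧
  y2 ∈ Set.Icc (0:ℝ) 1 ∧ y3 ∈ Set.Icc (0:ℝ) 1 ∧
  2 * b + p ≤ 2 ∧ b + y1 + y2 ≤ 2 ∧ b + y1 + y3 ≤ 2 ∧ b + y2 + y3 ≤ 2

/-- The block objective. -/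
def BlockObj (M b p y1 y2 y3 : ℝ) : ℝ := 24 * b + M * p + 4 * y1 + 8 * y2 + 8 * y3

theorem stmt_14 (M : ℝ) (hM : 15 ≤ M) :
    IsGreatest {v : ℝ | ∃ b p y1 y2 y3, BlockFeas b p y1 y2 y3 ∧
      v = BlockObj M b p y1 y2 y3} (M + 27) ∧
    (∀ b p y1 y2 y3, BlockFeas b p y1 y2 y3 →
      BlockObj M b p y1 y2 y3 = M + 27 →
      b = 1 / 2 ∧ p = 1 ∧ y1 = 3 / 4 ∧ y2 = 3 / 4 ∧ y3 = 3 / 4) := by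
  constructor
  · constructor
    · exact ⟨1/2, 1, 3/4, 3/4, 3/4, by norm_num [BlockFeas], by simp [BlockObj]; ring⟩
    · rintro v ⟨b, p, y1, y2, y3, ⟨hb, hp, h1, h2, h3, c1, c2, c3, c4⟩, rfl⟩
      simp only [Set.mem_Icc] at hb hp h1 h2 h3
      simp only [BlockObj]
      nlinarith [mul_nonneg (by linarith : (0:ℝ) ≤ M - 7) (by linarith [hp.2] : (0:ℝ) ≤ 1 - p)]
  · rintro b p y1 y2 y3 ⟨hb, hp, h1, h2, h3, c1, c2, c3, c4⟩ heq
    simp only [Set.mem_Icc] at hb hp h1 h2 h3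
    simp only [BlockObj] at heq
    have hp1 : p = 1 := by
      nlinarith [mul_nonneg (by linarith : (0:ℝ) ≤ M - 7) (by linarith [hp.2] : (0:ℝ) ≤ 1 - p)]
    subst hp1
    refine ⟨by linarith, rfl, by linarith, by linarith, by linarith⟩
end

section
/- In the single block with objective 24b + Mp + 4y₁ + 8y₂ + 8y₃ (M ≥ 15) and constraints 2b + p ≤ 2, b + y₁ + y₂ ≤ 2, b + y₁ + y₃ ≤ 2, b + y₂ + y₃ ≤ 2 over [0,1]⁵: fixing b = 0 gives LP maximum M + 20, and fixing b = 1 gives LP maximum 34. -/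
theorem stmt_15 (M : ℝ) (hM : 15 ≤ M) :
    IsGreatest {v : ℝ | ∃ p y1 y2 y3, BlockFeas 0 p y1 y2 y3 ∧
      v = BlockObj M 0 p y1 y2 y3} (M + 20) ∧
    IsGreatest {v : ℝ | ∃ p y1 y2 y3, BlockFeas 1 p y1 y2 y3 ∧
      v = BlockObj M 1 p y1 y2 y3} 34 := by
  constructor
  · constructor
    · exact ⟨1, 1, 1, 1, by norm_num [BlockFeas], by simp [BlockObj]; ring⟩
    · rintro v ⟨p, y1, y2, y3, ⟨_, ⟨hp0, hp1⟩, ⟨h10, h11⟩, ⟨h20, h21⟩, ⟨h30, h31⟩, _⟩, rfl⟩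
      simp only [BlockObj]
      nlinarith [mul_le_mul_of_nonneg_left hp1 (by linarith : (0:ℝ) ≤ M)]
  · constructor
    · exact ⟨0, 1/2, 1/2, 1/2, by norm_num [BlockFeas], by simp [BlockObj]; norm_num⟩
    · rintro v ⟨p, y1, y2, y3, ⟨_, ⟨hp0, hp1⟩, h1, h2, h3, hc, c1, c2, c3⟩, rfl⟩
      simp only [BlockObj]
      have hp : p ≤ 0 := by linarith
      nlinarith [mul_le_mul_of_nonneg_left hp (by linarith : (0:ℝ) ≤ M),
        mul_nonneg (by linarith : (0:ℝ) ≤ M) hp0]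
end

section
/- In the single block with objective 24b + Mp + 4y₁ + 8y₂ + 8y₃ (M ≥ 15) and constraints 2b + p ≤ 2, b + y₁ + y₂ ≤ 2, b + y₁ + y₃ ≤ 2, b + y₂ + y₃ ≤ 2 over [0,1]⁵: fixing y₁ = 0 gives LP maximum M + 24, and fixing y₁ = 1 also gives LP maximum M + 24. -/
theorem stmt_16 (M : ℝ) (hM : 15 ≤ M) :
    IsGreatest {v : ℝ | ∃ b p y2 y3, BlockFeas b p 0 y2 y3 ∧
      v = BlockObj M b p 0 y2 y3} (M + 24) ∧
    IsGreatest {v : ℝ | ∃ b p y2 y3, BlockFeas b p 1 y2 y3 ∧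
      v = BlockObj M b p 1 y2 y3} (M + 24) := by
  constructor
  · constructor
    · exact ⟨1/2, 1, 1, 1/2, by norm_num [BlockFeas], by norm_num [BlockObj]; ring⟩
    · rintro v ⟨b, p, y2, y3, ⟨⟨hb0, hb1⟩, ⟨hp0, hp1⟩, _, ⟨h20, h21⟩, ⟨h30, h31⟩,
        hc1, hc2, hc3, hc4⟩, rfl⟩
      simp only [BlockObj]
      nlinarith [mul_nonneg (by linarith : (0:ℝ) ≤ M - 8) (by linarith : (0:ℝ) ≤ 1 - p)]
  · constructor
    · exact ⟨1/2, 1, 1/2, 1/2, by norm_num [BlockFeas], by norm_num [BlockObj]; ring⟩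
    · rintro v ⟨b, p, y2, y3, ⟨⟨hb0, hb1⟩, ⟨hp0, hp1⟩, _, ⟨h20, h21⟩, ⟨h30, h31⟩,
        hc1, hc2, hc3, hc4⟩, rfl⟩
      simp only [BlockObj]
      nlinarith [mul_nonneg (by linarith : (0:ℝ) ≤ M - 4) (by linarith : (0:ℝ) ≤ 1 - p)]
end
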